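/- If a is a critical configuration and σ is a G-positive (not necessarily G-strongly positive) script, then (a + σΔ)° = a. -/

import Mathlib

/-- A finite directed multigraph without loops on `Fin (n+1)` with global sink `Fin.last n`. -/
structure SinkDigraph (n : ℕ) where
  e : Fin (n + 1) → Fin (n + 1) → ℕ
  loopless : ∀ i, e i i = 0
  sink_no_out : ∀ j, e (Fin.last n) j = 0
  path_to_sink : ∀ i, Relation.ReflTransGen (fun u v => 0 < e u v) i (Fin.last n)

namespace SinkDigraph

variable {n : ℕ}

/-- Out-degree of a vertex. -/
def outDeg (G : SinkDigraph n) (i : Fin (n + 1)) : ℕ := ∑ j, G.e i j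

/-- The (full) Laplacian matrix over ℤ. -/
def lap (G : SinkDigraph n) : Matrix (Fin (n + 1)) (Fin (n + 1)) ℤ :=
  Matrix.of fun i j => if i = j then (G.outDeg i : ℤ) else -(G.e i j : ℤ)

/-- The reduced Laplacian (rows/columns of the sink removed). -/
def redLap (G : SinkDigraph n) : Matrix (Fin n) (Fin n) ℤ :=
  Matrix.of fun i j => G.lap i.castSucc j.castSucc

/-- The reduced Laplacian over ℚ. -/
def redLapQ (G : SinkDigraph n) : Matrix (Fin n) (Fin n) ℚ :=
  (G.redLap).map (Int.cast : ℤ → ℚ)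

/-- A ℕ-script viewed as integer vector. -/
def natScript (σ : Fin n → ℕ) : Fin n → ℤ := fun i => (σ i : ℤ)

/-- Result of firing vertex `i` in configuration `a`. -/
def fire (G : SinkDigraph n) (a : Fin n → ℤ) (i : Fin n) : Fin n → ℤ :=
  fun j => a j - G.redLap i j

/-- Result of firing a sequence of vertices. -/
def applySeq (G : SinkDigraph n) : (Fin n → ℤ) → List (Fin n) → (Fin n → ℤ)
  | a, [] => a
  | a, i :: s => G.applySeq (G.fire a i) s

/-- A firing sequence is legal from `a` if every fired vertex is active when fired. -/
def Legal (G : SinkDigraph n) : (Fin n → ℤ) → List (Fin n) → Prop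
  | _, [] => True
  | a, i :: s => G.redLap i i ≤ a i ∧ G.Legal (G.fire a i) s

/-- The firing script of a firing sequence. -/
def script (s : List (Fin n)) : Fin n → ℤ := fun i => (s.count i : ℤ)

/-- A configuration is stable if it is non-negative and no vertex is active. -/
def IsStable (G : SinkDigraph n) (a : Fin n → ℤ) : Prop :=
  ∀ i, 0 ≤ a i ∧ a i < G.redLap i i

/-- `b` is the stabilization of `a`. -/
def Stabilizes (G : SinkDigraph n) (a b : Fin n → ℤ) : Prop :=
  ∃ s : List (Fin n), G.Legal a s ∧ G.applySeq a s = b ∧ G.IsStable b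

/-- The maximal stable configuration `c_max`. -/
def cmax (G : SinkDigraph n) : Fin n → ℤ := fun i => (G.outDeg i.castSucc : ℤ) - 1

/-- A stable configuration is critical if it is the stabilization of `c_max + c`
for some non-negative `c`. -/
def IsCritical (G : SinkDigraph n) (a : Fin n → ℤ) : Prop :=
  ∃ c : Fin n → ℤ, 0 ≤ c ∧ G.Stabilizes (G.cmax + c) a

/-- `σΔ ≻ 0`, i.e. `σΔ` is non-negative and non-zero. -/
def GPositive (G : SinkDigraph n) (σ : Fin n → ℕ) : Prop :=
  0 ≤ Matrix.vecMul (natScript σ) G.redLap ∧ Matrix.vecMul (natScript σ) G.redLap ≠ 0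

/-- Reachability along directed edges. -/
def Reach (G : SinkDigraph n) : Fin (n + 1) → Fin (n + 1) → Prop :=
  Relation.ReflTransGen (fun u v => 0 < G.e u v)

/-- A source component: a strongly connected component with no in-going edge from outside. -/
def IsSourceComponent (G : SinkDigraph n) (S : Set (Fin (n + 1))) : Prop :=
  (∃ i, S = {j | G.Reach i j ∧ G.Reach j i}) ∧ ∀ j ∉ S, ∀ k ∈ S, G.e j k = 0

/-- A `G`-strongly positive script. -/
def GStronglyPositive (G : SinkDigraph n) (σ : Fin n → ℕ) : Prop :=
  G.GPositive σ ∧ ∀ S : Set (Fin (n + 1)), G.IsSourceComponent S →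
    ∃ i : Fin n, i.castSucc ∈ S ∧ Matrix.vecMul (natScript σ) G.redLap i ≠ 0

/-- Linear equivalence of configurations. -/
def Equiv (G : SinkDigraph n) (a b : Fin n → ℤ) : Prop :=
  ∃ σ : Fin n → ℤ, b - a = Matrix.vecMul σ G.redLap

/-- The weight of a configuration. -/
def weight (a : Fin n → ℤ) : ℤ := ∑ i, a i

/-- The energy (CFG) order: compare energy vectors `aΔ⁻¹` componentwise over ℚ. -/
def cfgLE (G : SinkDigraph n) (a b : Fin n → ℤ) : Prop :=
  Matrix.vecMul (fun i => (a i : ℚ)) (G.redLapQ)⁻¹ ≤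
    Matrix.vecMul (fun i => (b i : ℚ)) (G.redLapQ)⁻¹

/-- A non-negative configuration is superstable if reverse-firing any nonzero ℕ-script
produces a negative component. -/
def IsSuperstable (G : SinkDigraph n) (a : Fin n → ℤ) : Prop :=
  0 ≤ a ∧ ∀ σ : Fin n → ℕ, σ ≠ 0 →
    ∃ i, a i - Matrix.vecMul (natScript σ) G.redLap i < 0

end SinkDigraph


namespace SinkDigraph

variable {n : ℕ} (G : SinkDigraph n)

lemma vecMul_apply (v : Fin n → ℤ) (M : Matrix (Fin n) (Fin n) ℤ) (j : Fin n) :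
    Matrix.vecMul v M j = ∑ i, v i * M i j := by
  simp [Matrix.vecMul, dotProduct]

lemma vecMul_single (i : Fin n) (M : Matrix (Fin n) (Fin n) ℤ) :
    Matrix.vecMul (Pi.single i 1) M = M i := by
  funext j
  rw [vecMul_apply]
  simp [Pi.single_apply]

lemma redLap_diag (i : Fin n) : G.redLap i i = (G.outDeg i.castSucc : ℤ) := by
  simp [redLap, lap]

lemma redLap_off_diag {i j : Fin n} (h : i ≠ j) :
    G.redLap i j = -(G.e i.castSucc j.castSucc : ℤ) := by
  simp [redLap, lap, Fin.castSucc_inj, h]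

lemma redLap_off_diag_nonpos {i j : Fin n} (h : i ≠ j) : G.redLap i j ≤ 0 := by
  rw [G.redLap_off_diag h]
  omega

lemma fire_comm (a : Fin n → ℤ) (i j : Fin n) :
    G.fire (G.fire a i) j = G.fire (G.fire a j) i := by
  funext k; simp [fire]; ring

lemma fire_add (a y : Fin n → ℤ) (i : Fin n) :
    G.fire (a + y) i = G.fire a i + y := by
  funext k; simp [fire]; ring

lemma applySeq_add (a y : Fin n → ℤ) (s : List (Fin n)) :
    G.applySeq (a + y) s = G.applySeq a s + y := by
  induction s generalizing a with
  | nil => rfl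
  | cons i s ih => simp [applySeq, fire_add, ih]

lemma applySeq_append (a : Fin n → ℤ) (s t : List (Fin n)) :
    G.applySeq a (s ++ t) = G.applySeq (G.applySeq a s) t := by
  induction s generalizing a with
  | nil => rfl
  | cons i s ih => simp [applySeq, ih]

lemma legal_append {a : Fin n → ℤ} {s t : List (Fin n)}
    (hs : G.Legal a s) (ht : G.Legal (G.applySeq a s) t) : G.Legal a (s ++ t) := by
  induction s generalizing a with
  | nil => exact ht
  | cons i s ih => exact ⟨hs.1, ih hs.2 ht⟩

lemma legal_mono {s : List (Fin n)} :
    ∀ {x y : Fin n → ℤ}, (∀ i, x i ≤ y i) → G.Legal x s → G.Legal y s := by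
  induction s with
  | nil => intro x y _ _; trivial
  | cons i s ih =>
    intro x y h hx
    refine ⟨le_trans hx.1 (h i), ih (fun j => ?_) hx.2⟩
    simp only [fire]
    exact sub_le_sub_right (h j) _

lemma le_applySeq_of_not_mem {s : List (Fin n)} :
    ∀ {a : Fin n → ℤ} {i : Fin n}, i ∉ s → a i ≤ G.applySeq a s i := by
  induction s with
  | nil => intro a i _; exact le_refl _
  | cons j s ih =>
    intro a i h
    have hji : j ≠ i := fun hji => h (by simp [hji])
    have h1 : a i ≤ G.fire a j i := by
      simp only [fire]
      have := G.redLap_off_diag_nonpos hji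
      omega
    exact le_trans h1 (ih (fun hm => h (List.mem_cons_of_mem _ hm)))

lemma script_nil : script ([] : List (Fin n)) = 0 := by
  funext i; simp [script]

lemma script_cons (i : Fin n) (s : List (Fin n)) :
    script (i :: s) = script s + Pi.single i 1 := by
  funext j
  by_cases h : j = i <;>
    simp [script, List.count_cons, Pi.single_apply, h, @eq_comm _ i j]

lemma applySeq_eq_sub (a : Fin n → ℤ) (s : List (Fin n)) :
    G.applySeq a s = a - Matrix.vecMul (script s) G.redLap := by
  induction s generalizing a with
  | nil => simp [applySeq, script_nil]
  | cons i s ih =>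
    rw [applySeq, ih, script_cons, Matrix.add_vecMul, vecMul_single]
    funext j
    simp [fire]
    ring

lemma exists_split {i : Fin n} : ∀ {s : List (Fin n)}, i ∈ s →
    ∃ u v, s = u ++ i :: v ∧ i ∉ u := by
  intro s
  induction s with
  | nil => intro h; simp at h
  | cons j s ih =>
    intro h
    by_cases hji : i = j
    · exact ⟨[], s, by simp [hji], by simp⟩
    · obtain ⟨u, v, rfl, hu⟩ := ih (by
        rcases List.mem_cons.mp h with h1 | h1
        · exact absurd h1 hji
        · exact h1)
      exact ⟨j :: u, v, rfl, by simp [hu, hji]⟩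

lemma legal_swap {i : Fin n} : ∀ {u : List (Fin n)} {a : Fin n → ℤ} {v : List (Fin n)},
    i ∉ u → G.redLap i i ≤ a i → G.Legal a (u ++ i :: v) →
    G.Legal a (i :: (u ++ v)) := by
  intro u
  induction u with
  | nil => intro a v _ hi h; exact ⟨hi, h.2⟩
  | cons j u ih =>
    intro a v hiu hi h
    have hij : i ≠ j := fun h' => hiu (by simp [h'])
    have hiu' : i ∉ u := fun h' => hiu (by simp [h'])
    have hi' : G.redLap i i ≤ G.fire a j i := by
      have := G.redLap_off_diag_nonpos (Ne.symm hij)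
      simp only [fire]; omega
    have h2 := ih hiu' hi' h.2
    refine ⟨hi, ?_, ?_⟩
    · have := G.redLap_off_diag_nonpos hij
      have hj := h.1
      simp only [fire]; omega
    · rw [G.fire_comm]
      exact h2.2

lemma count_le_of_legal : ∀ {t : List (Fin n)} {a : Fin n → ℤ} {s : List (Fin n)},
    G.Legal a s → G.IsStable (G.applySeq a s) → G.Legal a t →
    ∀ j, t.count j ≤ s.count j := by
  intro t
  induction t with
  | nil => intro a s _ _ _ j; simp
  | cons i t ih =>
    intro a s hs hstable ht j
    have hi : G.redLap i i ≤ a i := ht.1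
    have himem : i ∈ s := by
      by_contra h
      have h1 := G.le_applySeq_of_not_mem h (a := a)
      have h2 := (hstable i).2
      omega
    obtain ⟨u, v, rfl, hu⟩ := exists_split himem
    have hs' : G.Legal a (i :: (u ++ v)) := G.legal_swap hu hi hs
    have hcnt : script (u ++ i :: v) = script (i :: (u ++ v)) := by
      funext k
      simp [script, List.count_append, List.count_cons]
      ring
    have happ : G.applySeq a (u ++ i :: v) = G.applySeq a (i :: (u ++ v)) := by
      rw [G.applySeq_eq_sub, G.applySeq_eq_sub, hcnt]
    have hstable' : G.IsStable (G.applySeq (G.fire a i) (u ++ v)) := by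
      rw [show G.applySeq (G.fire a i) (u ++ v) = G.applySeq a (i :: (u ++ v)) from rfl, ← happ]
      exact hstable
    have hcle := ih hs'.2 hstable' ht.2 j
    have : (u ++ i :: v).count j = (i :: (u ++ v)).count j := by
      simp [List.count_append, List.count_cons]; ring
    rw [this]
    simp only [List.count_cons] at *
    omega

lemma stabilizes_unique {a b₁ b₂ : Fin n → ℤ}
    (h1 : G.Stabilizes a b₁) (h2 : G.Stabilizes a b₂) : b₁ = b₂ := by
  obtain ⟨s₁, hl₁, ha₁, hs₁⟩ := h1
  obtain ⟨s₂, hl₂, ha₂, hs₂⟩ := h2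
  have hc : script s₁ = script s₂ := by
    funext j
    have h12 := G.count_le_of_legal hl₂ (ha₂ ▸ hs₂) hl₁ j
    have h21 := G.count_le_of_legal hl₁ (ha₁ ▸ hs₁) hl₂ j
    simp [script]
    omega
  rw [← ha₁, ← ha₂, G.applySeq_eq_sub, G.applySeq_eq_sub, hc]

end SinkDigraph

namespace SinkDigraph

variable {n : ℕ} (G : SinkDigraph n)

lemma redLap_row_sum (i : Fin n) :
    ∑ j, G.redLap i j = (G.e i.castSucc (Fin.last n) : ℤ) := by
  have h1 : ∀ j : Fin n, G.redLap i j =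
      (if i = j then (G.outDeg i.castSucc : ℤ) else 0) - (G.e i.castSucc j.castSucc : ℤ) := by
    intro j
    by_cases h : i = j
    · subst h
      simp [G.redLap_diag, G.loopless]
    · simp [G.redLap_off_diag h, h]
  rw [Finset.sum_congr rfl fun j _ => h1 j, Finset.sum_sub_distrib]
  have h2 : ∑ j : Fin n, (if i = j then (G.outDeg i.castSucc : ℤ) else 0) =
      (G.outDeg i.castSucc : ℤ) := by simp
  have h3 : (G.outDeg i.castSucc : ℤ) =
      ∑ j : Fin n, (G.e i.castSucc j.castSucc : ℤ) + (G.e i.castSucc (Fin.last n) : ℤ) := by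
    rw [outDeg]
    push_cast
    rw [Fin.sum_univ_castSucc]
  rw [h2, h3]
  ring

lemma vecMul_nonpos_of_zero {ρ : Fin n → ℕ} {i : Fin n} (h : ρ i = 0) :
    Matrix.vecMul (natScript ρ) G.redLap i ≤ 0 := by
  rw [vecMul_apply]
  apply Finset.sum_nonpos
  intro k _
  by_cases hk : k = i
  · subst hk; simp [natScript, h]
  · exact mul_nonpos_of_nonneg_of_nonpos (by simp [natScript]) (G.redLap_off_diag_nonpos hk)

lemma exists_pos_vecMul {ρ : Fin n → ℕ} (hρ : ρ ≠ 0) :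
    ∃ i, 1 ≤ Matrix.vecMul (natScript ρ) G.redLap i := by
  by_contra hcon
  push_neg at hcon
  have hnp : ∀ j, Matrix.vecMul (natScript ρ) G.redLap j ≤ 0 := fun j => by
    have := hcon j; omega
  have hsum : ∑ j, Matrix.vecMul (natScript ρ) G.redLap j =
      ∑ i, (ρ i : ℤ) * (G.e i.castSucc (Fin.last n) : ℤ) := by
    simp only [vecMul_apply]
    rw [Finset.sum_comm]
    exact Finset.sum_congr rfl fun i _ => by
      rw [← Finset.mul_sum, G.redLap_row_sum]; rfl
  have hge : 0 ≤ ∑ i, (ρ i : ℤ) * (G.e i.castSucc (Fin.last n) : ℤ) :=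
    Finset.sum_nonneg fun i _ => by positivity
  have hle : ∑ j, Matrix.vecMul (natScript ρ) G.redLap j ≤ 0 :=
    Finset.sum_nonpos fun j _ => hnp j
  have hzero : ∀ j, Matrix.vecMul (natScript ρ) G.redLap j = 0 := by
    have := (Finset.sum_eq_zero_iff_of_nonpos (fun j _ => hnp j)).mp
      (le_antisymm hle (hsum ▸ hge))
    exact fun j => this j (Finset.mem_univ j)
  have hsink : ∀ i : Fin n, (ρ i : ℤ) * (G.e i.castSucc (Fin.last n) : ℤ) = 0 := by
    have hs0 : ∑ i, (ρ i : ℤ) * (G.e i.castSucc (Fin.last n) : ℤ) = 0 := by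
      rw [← hsum]; exact Finset.sum_eq_zero fun j _ => hzero j
    have := (Finset.sum_eq_zero_iff_of_nonneg (fun i _ => by positivity)).mp hs0
    exact fun i => this i (Finset.mem_univ i)
  -- support set
  set S : Set (Fin (n + 1)) := {v | ∃ i : Fin n, i.castSucc = v ∧ 0 < ρ i} with hS
  have hclosed : ∀ u ∈ S, ∀ v, 0 < G.e u v → v ∈ S := by
    rintro u ⟨i, rfl, hi⟩ v hv
    by_cases hlast : v = Fin.last n
    · exfalso
      subst hlast
      have := hsink i
      have h1 : 0 < (ρ i : ℤ) := by exact_mod_cast hi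
      have h2 : 0 < (G.e i.castSucc (Fin.last n) : ℤ) := by exact_mod_cast hv
      nlinarith
    · obtain ⟨j, rfl⟩ : ∃ j : Fin n, j.castSucc = v :=
        ⟨v.castPred hlast, Fin.castSucc_castPred v hlast⟩
      by_cases hj : 0 < ρ j
      · exact ⟨j, rfl, hj⟩
      · exfalso
        have hj0 : ρ j = 0 := by omega
        have hij : i ≠ j := fun h => by rw [h] at hi; omega
        have hwj := hzero j
        rw [vecMul_apply] at hwj
        have hterm : ∀ k ∈ Finset.univ, natScript ρ k * G.redLap k j ≤ 0 := by
          intro k _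
          by_cases hk : k = j
          · subst hk; simp [natScript, hj0]
          · exact mul_nonpos_of_nonneg_of_nonpos (by simp [natScript])
              (G.redLap_off_diag_nonpos hk)
        have := (Finset.sum_eq_zero_iff_of_nonpos hterm).mp hwj i (Finset.mem_univ i)
        rw [G.redLap_off_diag hij] at this
        have h1 : 0 < (ρ i : ℤ) := by exact_mod_cast hi
        have h2 : 0 < (G.e i.castSucc j.castSucc : ℤ) := by exact_mod_cast hv
        simp only [natScript] at this
        nlinarith
  obtain ⟨i₀, hi₀⟩ : ∃ i₀, 0 < ρ i₀ := by
    by_contra h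
    push_neg at h
    exact hρ (funext fun i => Nat.le_zero.mp (h i))
  have hstart : i₀.castSucc ∈ S := ⟨i₀, rfl, hi₀⟩
  have key : ∀ v, Relation.ReflTransGen (fun u v => 0 < G.e u v) i₀.castSucc v → v ∈ S := by
    intro v hv
    induction hv with
    | refl => exact hstart
    | tail _ hedge ih => exact hclosed _ ih _ hedge
  have hlastS : Fin.last n ∈ S := key _ (G.path_to_sink i₀.castSucc)
  obtain ⟨i, hi, -⟩ := hlastS
  exact absurd hi (ne_of_lt (Fin.castSucc_lt_last i))

lemma natScript_update {ρ : Fin n → ℕ} {i : Fin n} (h : 0 < ρ i) :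
    natScript ρ = natScript (Function.update ρ i (ρ i - 1)) + Pi.single i 1 := by
  funext j
  by_cases hj : j = i
  · subst hj
    simp only [natScript, Function.update_self, Pi.add_apply, Pi.single_eq_same]
    omega
  · simp [natScript, Function.update_of_ne hj, Pi.single_eq_of_ne hj]

lemma greedy : ∀ (k : ℕ) (ρ : Fin n → ℕ), (∑ i, ρ i) = k → ∀ c : Fin n → ℤ, 0 ≤ c →
    ∃ s, G.Legal (G.cmax + c + Matrix.vecMul (natScript ρ) G.redLap) s ∧
      G.applySeq (G.cmax + c + Matrix.vecMul (natScript ρ) G.redLap) s = G.cmax + c := by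
  intro k
  induction k with
  | zero =>
    intro ρ hρ c _
    have h0 : ρ = 0 := by
      funext i
      have := Finset.sum_eq_zero_iff.mp hρ i (Finset.mem_univ i)
      simpa using this
    have : Matrix.vecMul (natScript ρ) G.redLap = 0 := by
      subst h0
      have : natScript (0 : Fin n → ℕ) = 0 := funext fun i => rfl
      rw [this, Matrix.zero_vecMul]
    refine ⟨[], trivial, ?_⟩
    rw [this, add_zero]
    rfl
  | succ k ih =>
    intro ρ hρ c hc
    have hne : ρ ≠ 0 := by
      intro h
      rw [h] at hρ
      simp at hρ
    obtain ⟨i, hi⟩ := G.exists_pos_vecMul hne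
    have hρi : 0 < ρ i := by
      by_contra h
      have := G.vecMul_nonpos_of_zero (ρ := ρ) (i := i) (by omega)
      omega
    set ρ' := Function.update ρ i (ρ i - 1) with hρ'
    have hsum' : ∑ j, ρ' j = k := by
      rw [hρ', Finset.sum_update_of_mem (Finset.mem_univ i), ← Finset.erase_eq]
      have h2 : ∑ x ∈ Finset.univ.erase i, ρ x + ρ i = k + 1 := by
        rw [Finset.sum_erase_add _ _ (Finset.mem_univ i)]; exact hρ
      omega
    have hsplit := natScript_update (ρ := ρ) hρi
    have hvec : Matrix.vecMul (natScript ρ) G.redLap =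
        Matrix.vecMul (natScript ρ') G.redLap + G.redLap i := by
      rw [← hρ'] at hsplit
      rw [hsplit, Matrix.add_vecMul, vecMul_single]
    have hfire : G.fire (G.cmax + c + Matrix.vecMul (natScript ρ) G.redLap) i =
        G.cmax + c + Matrix.vecMul (natScript ρ') G.redLap := by
      funext j
      simp only [fire, hvec, Pi.add_apply]
      ring
    obtain ⟨s, hsleg, hsapp⟩ := ih ρ' hsum' c hc
    refine ⟨i :: s, ⟨?_, ?_⟩, ?_⟩
    · have h1 : G.cmax i = G.redLap i i - 1 := by
        rw [cmax, G.redLap_diag]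
      have h2 : 0 ≤ c i := hc i
      simp only [Pi.add_apply, h1]
      omega
    · rw [hfire]; exact hsleg
    · rw [applySeq, hfire]; exact hsapp

end SinkDigraph

open SinkDigraph Matrix

theorem critical_recurrent_of_positive (n : ℕ) (G : SinkDigraph n) (a : Fin n → ℤ)
    (ha : G.IsCritical a) (σ : Fin n → ℕ) (hσ : G.GPositive σ)
    (b : Fin n → ℤ)
    (hb : G.Stabilizes (a + Matrix.vecMul (natScript σ) G.redLap) b) :
    b = a := by
  obtain ⟨c, hc, s₀, hs₀leg, hs₀app, hastable⟩ := ha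
  obtain ⟨s₁, hs₁leg, hs₁app, hbstable⟩ := hb
  set w := Matrix.vecMul (natScript σ) G.redLap with hw
  have hw0 : 0 ≤ w := hσ.1
  set x := G.cmax + c + w with hx
  -- Path 1: stabilize x by first running s₀ (shifted by w), then s₁; result is b.
  have hxge : ∀ i, (G.cmax + c) i ≤ x i := fun i => by
    have h0 : (0:ℤ) ≤ w i := hw0 i
    simp only [hx, Pi.add_apply]
    omega
  have leg1 : G.Legal x s₀ := G.legal_mono hxge hs₀leg
  have app1 : G.applySeq x s₀ = a + w := by
    rw [hx, G.applySeq_add, hs₀app]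
  have leg2 : G.Legal x (s₀ ++ s₁) := G.legal_append leg1 (by rw [app1]; exact hs₁leg)
  have app2 : G.applySeq x (s₀ ++ s₁) = b := by
    rw [G.applySeq_append, app1, hs₁app]
  -- Path 2: stabilize x by first firing the script σ greedily, then running s₀; result is a.
  obtain ⟨s₂, leg3, app3⟩ := G.greedy (∑ i, σ i) σ rfl c hc
  have leg4 : G.Legal x (s₂ ++ s₀) := G.legal_append leg3 (by rw [app3]; exact hs₀leg)
  have app4 : G.applySeq x (s₂ ++ s₀) = a := by
    rw [G.applySeq_append, app3, hs₀app]
  exact G.stabilizes_unique ⟨s₀ ++ s₁, leg2, app2, hbstable⟩ ⟨s₂ ++ s₀, leg4, app4, hastable⟩
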